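/- Let A = (Z/2)³, V = (Z/2)² with trivial A-action, and δw = x₁*⊗v₁ or δw = x₁*⊗v₁ + x₂*⊗v₂ a fixed element of A*⊗V (with x₁*, x₂*, x₃* a dual basis of A* and v₁, v₂ a basis of V). Then for every nonzero y ∈ A*⊗V with y ≠ δw, there exists an F₂-linear projection p : A* → Z/2 (evaluation at a suitable element of A) such that the induced image of y in (Z/2)⊗V ≅ V is nonzero and different from the image of δw. -/
import Mathlib

set_option synthInstance.maxSize 2000 in
set_option synthInstance.maxHeartbeats 1000000 in
set_option maxHeartbeats 1000000 in
lemma sep_aux1 : ∀ (p q r s t u : ZMod 2),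
    ¬(p = 0 ∧ q = 0 ∧ r = 0 ∧ s = 0 ∧ t = 0 ∧ u = 0) →
    ¬(p = 1 ∧ q = 0 ∧ r = 0 ∧ s = 0 ∧ t = 0 ∧ u = 0) →
    ∃ a0 a1 a2 : ZMod 2, ¬(a0 = 0 ∧ a1 = 0 ∧ a2 = 0) ∧
      ¬(a0*p + a1*r + a2*t = 0 ∧ a0*q + a1*s + a2*u = 0) ∧
      ¬(a0*p + a1*r + a2*t = a0 ∧ a0*q + a1*s + a2*u = 0) := by decide

set_option synthInstance.maxSize 2000 in
set_option synthInstance.maxHeartbeats 1000000 in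
set_option maxHeartbeats 1000000 in
lemma sep_aux2 : ∀ (p q r s t u : ZMod 2),
    ¬(p = 0 ∧ q = 0 ∧ r = 0 ∧ s = 0 ∧ t = 0 ∧ u = 0) →
    ¬(p = 1 ∧ q = 0 ∧ r = 0 ∧ s = 1 ∧ t = 0 ∧ u = 0) →
    ∃ a0 a1 a2 : ZMod 2, ¬(a0 = 0 ∧ a1 = 0 ∧ a2 = 0) ∧
      ¬(a0*p + a1*r + a2*t = 0 ∧ a0*q + a1*s + a2*u = 0) ∧
      ¬(a0*p + a1*r + a2*t = a0 ∧ a0*q + a1*s + a2*u = a1) := by decide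


/-- Let `A = (ℤ/2)³`, `V = (ℤ/2)²`, and `δw ∈ A* ⊗ V ≅ Hom(A, V)` equal to
`x₁* ⊗ v₁` or `x₁* ⊗ v₁ + x₂* ⊗ v₂` in suitable bases. Then every nonzero
`y ∈ Hom(A, V)` with `y ≠ δw` can be restricted (evaluated at a suitable
nonzero element of `A`, i.e. projected via some `p : A* → ℤ/2`) so that its
image in `V` is nonzero and differs from that of `δw`. -/
theorem separate_from_delta_w
    (δw y : (Fin 3 → ZMod 2) →ₗ[ZMod 2] (Fin 2 → ZMod 2))
    (hδ : (∀ a, δw a = ![a 0, 0]) ∨ (∀ a, δw a = ![a 0, a 1]))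
    (hy0 : y ≠ 0) (hyδ : y ≠ δw) :
    ∃ a : Fin 3 → ZMod 2, a ≠ 0 ∧ y a ≠ 0 ∧ y a ≠ δw a := by
  set e : Fin 3 → (Fin 3 → ZMod 2) := fun i => Pi.single i 1 with he
  have hrep : ∀ a : Fin 3 → ZMod 2, a = a 0 • e 0 + a 1 • e 1 + a 2 • e 2 := by
    intro a; funext j
    fin_cases j <;> simp [he, Pi.single_apply]
  have hya : ∀ (a : Fin 3 → ZMod 2) (j : Fin 2),
      y a j = a 0 * y (e 0) j + a 1 * y (e 1) j + a 2 * y (e 2) j := by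
    intro a j
    conv_lhs => rw [hrep a]
    simp [map_add, map_smul]
  have h0 : ¬(y (e 0) 0 = 0 ∧ y (e 0) 1 = 0 ∧ y (e 1) 0 = 0 ∧ y (e 1) 1 = 0 ∧
      y (e 2) 0 = 0 ∧ y (e 2) 1 = 0) := by
    rintro ⟨p0, p1, p2, p3, p4, p5⟩
    exact hy0 (LinearMap.ext fun a => funext fun j => by
      rw [hya]; fin_cases j <;> simp [p0, p1, p2, p3, p4, p5])
  rcases hδ with hδ | hδ
  · have h1 : ¬(y (e 0) 0 = 1 ∧ y (e 0) 1 = 0 ∧ y (e 1) 0 = 0 ∧ y (e 1) 1 = 0 ∧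
        y (e 2) 0 = 0 ∧ y (e 2) 1 = 0) := by
      rintro ⟨p0, p1, p2, p3, p4, p5⟩
      exact hyδ (LinearMap.ext fun a => funext fun j => by
        rw [hya, hδ a]; fin_cases j <;> simp [p0, p1, p2, p3, p4, p5])
    obtain ⟨a0, a1, a2, ha, hn0, hnd⟩ := sep_aux1 _ _ _ _ _ _ h0 h1
    refine ⟨![a0, a1, a2], ?_, ?_, ?_⟩
    · intro h; exact ha ⟨congrFun h 0, congrFun h 1, congrFun h 2⟩
    · intro h
      refine hn0 ⟨?_, ?_⟩
      · have := congrFun h 0; rw [hya] at this; simpa using this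
      · have := congrFun h 1; rw [hya] at this; simpa using this
    · intro h
      rw [hδ] at h
      refine hnd ⟨?_, ?_⟩
      · have := congrFun h 0; rw [hya] at this; simpa using this
      · have := congrFun h 1; rw [hya] at this; simpa using this
  · have h1 : ¬(y (e 0) 0 = 1 ∧ y (e 0) 1 = 0 ∧ y (e 1) 0 = 0 ∧ y (e 1) 1 = 1 ∧
        y (e 2) 0 = 0 ∧ y (e 2) 1 = 0) := by
      rintro ⟨p0, p1, p2, p3, p4, p5⟩
      exact hyδ (LinearMap.ext fun a => funext fun j => by
        rw [hya, hδ a]; fin_cases j <;> simp [p0, p1, p2, p3, p4, p5])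
    obtain ⟨a0, a1, a2, ha, hn0, hnd⟩ := sep_aux2 _ _ _ _ _ _ h0 h1
    refine ⟨![a0, a1, a2], ?_, ?_, ?_⟩
    · intro h; exact ha ⟨congrFun h 0, congrFun h 1, congrFun h 2⟩
    · intro h
      refine hn0 ⟨?_, ?_⟩
      · have := congrFun h 0; rw [hya] at this; simpa using this
      · have := congrFun h 1; rw [hya] at this; simpa using this
    · intro h
      rw [hδ] at h
      refine hnd ⟨?_, ?_⟩
      · have := congrFun h 0; rw [hya] at this; simpa using this
      · have := congrFun h 1; rw [hya] at this; simpa using this
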